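/- Let h > 0, let μ₁,…,μ_N be nonnegative finite Borel measures on [0,h], define φ(0) := 0 and φ(r) := r + Σᵢ₌₁ᴺ μᵢ([0,r]) for r ∈ (0,h], and let dφ denote the Lebesgue–Stieltjes measure on [0,h] associated with φ. Then Lebesgue measure on [0,h] and the continuous parts μᵢᶜ of the measures μᵢ are all absolutely continuous with respect to dφ; their Radon–Nikodym derivatives m_L := dLeb/dφ and mᵢᶜ := dμᵢᶜ/dφ satisfy 0 ≤ m_L ≤ 1 and 0 ≤ mᵢᶜ ≤ 1 dφ-almost everywhere; m_L(r) + Σᵢ₌₁ᴺ mᵢᶜ(r) = 1 for dφ-a.e. r outside the countable set of atoms of dφ; and m_L and every mᵢᶜ vanish dφ-a.e. on the set of atoms of dφ. -/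

import Mathlib

open Set Function MeasureTheory

/-- The continuous (non-atomic) part of a Borel measure on `ℝ`: the measure restricted
to the set of points that are not atoms. -/
noncomputable def contPart (ν : Measure ℝ) : Measure ℝ := ν.restrict {t | ν {t} = 0}

/-- Let `h > 0`, let `μ₁,…,μ_N` be nonnegative finite Borel measures on
`[0,h]`, and let `φ` be the (right-continuous version of) the function
`φ r = r + Σᵢ μᵢ([0,r])` for `r ≥ 0`, `φ r = r` for `r < 0`, with associated
Lebesgue–Stieltjes measure `dφ = φ.measure`. Then Lebesgue measure on `[0,h]` and the
continuous parts `μᵢᶜ` are absolutely continuous w.r.t. `dφ`; the Radon–Nikodym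
derivatives `m_L = d Leb|_{[0,h]}/dφ` and `mᵢᶜ = dμᵢᶜ/dφ` are between `0` and `1`
`dφ`-a.e.; `m_L + Σᵢ mᵢᶜ = 1` `dφ`-a.e. on `[0,h]` outside the atoms of `dφ`; and
`m_L`, `mᵢᶜ` vanish `dφ`-a.e. on the set of atoms of `dφ`. -/
lemma countable_atoms (μ : Measure ℝ) [SFinite μ] : ({t : ℝ | μ {t} ≠ 0}).Countable := by
  have h := Measure.countable_meas_level_set_pos (μ := μ) (g := id (α := ℝ)) measurable_id
  refine h.mono fun t ht => ?_
  simp only [mem_setOf_eq, id_eq, setOf_eq_eq_singleton] at *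
  exact pos_iff_ne_zero.2 ht

lemma isFiniteMeasure_finset_sum {ι : Type*} (s : Finset ι) (μ : ι → Measure ℝ)
    [∀ i, IsFiniteMeasure (μ i)] : IsFiniteMeasure (∑ i ∈ s, μ i) := by
  constructor
  rw [Measure.finset_sum_apply]
  exact ENNReal.sum_lt_top.2 fun i _ => measure_lt_top _ _

lemma null_of_countable (μ : Measure ℝ) (s : Set ℝ) (hs : s.Countable)
    (h : ∀ x ∈ s, μ {x} = 0) : μ s = 0 := by
  rw [← Set.biUnion_of_singleton s]
  exact (measure_biUnion_null_iff hs).2 h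

lemma rnDeriv_finset_sum {ι : Type*} [DecidableEq ι] (s : Finset ι) (μ : ι → Measure ℝ)
    [∀ i, IsFiniteMeasure (μ i)] (Φ : Measure ℝ) [SigmaFinite Φ] :
    (∑ i ∈ s, μ i).rnDeriv Φ =ᵐ[Φ] fun x => ∑ i ∈ s, (μ i).rnDeriv Φ x := by
  induction s using Finset.induction with
  | empty =>
    simp only [Finset.sum_empty]
    filter_upwards [Measure.rnDeriv_zero Φ] with x hx
    simp [hx]
  | @insert a t hmem ih =>
    rw [Finset.sum_insert hmem]
    haveI := isFiniteMeasure_finset_sum t μ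
    refine (Measure.rnDeriv_add' _ _ _).trans ?_
    filter_upwards [ih] with x hx
    simp only [Pi.add_apply, hx, Finset.sum_insert hmem]

lemma phi_measure_eq (N : ℕ) (h : ℝ) (μs : Fin N → Measure ℝ)
    (hfin : ∀ i, IsFiniteMeasure (μs i))
    (hsupp : ∀ i, μs i ((Icc (0:ℝ) h)ᶜ) = 0)
    (φ : StieltjesFunction ℝ)
    (hφ : ∀ r : ℝ, φ r = if r < 0 then r else r + ∑ i, ((μs i) (Icc 0 r)).toReal) :
    φ.measure = volume + ∑ i, μs i := by
  haveI := hfin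
  refine Measure.ext_of_Ioc _ _ fun a b hab => ?_
  rw [StieltjesFunction.measure_Ioc, Measure.add_apply, Measure.finset_sum_apply,
    Real.volume_Ioc]
  have hnull : ∀ i (s : Set ℝ), s ⊆ (Icc (0:ℝ) h)ᶜ → μs i s = 0 :=
    fun i s hs => measure_mono_null hs (hsupp i)
  rcases lt_or_ge b 0 with hb | hb
  · have ha : a < 0 := hab.trans hb
    rw [hφ a, hφ b, if_pos ha, if_pos hb]
    have hz : ∀ i, μs i (Ioc a b) = 0 := by
      intro i
      refine hnull i _ fun x hx => ?_
      simp only [mem_compl_iff, mem_Icc, not_and, not_le]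
      intro h0; linarith [hx.2]
    simp [hz]
  · rw [hφ b, if_neg (not_lt.2 hb)]
    rcases lt_or_ge a 0 with ha | ha
    · rw [hφ a, if_pos ha]
      have hIoc : ∀ i, μs i (Ioc a b) = μs i (Icc 0 b) := by
        intro i
        refine le_antisymm ?_ (measure_mono fun x hx => ⟨lt_of_lt_of_le ha hx.1, hx.2⟩)
        have hsub : Ioc a b ⊆ Ioo a 0 ∪ Icc 0 b := by
          intro x hx
          rcases lt_or_ge x 0 with h' | h'
          · exact Or.inl ⟨hx.1, h'⟩
          · exact Or.inr ⟨h', hx.2⟩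
        calc μs i (Ioc a b) ≤ μs i (Ioo a 0 ∪ Icc 0 b) := measure_mono hsub
          _ ≤ μs i (Ioo a 0) + μs i (Icc 0 b) := measure_union_le _ _
          _ = μs i (Icc 0 b) := by
              rw [hnull i (Ioo a 0) (fun x hx => by
                simp only [mem_compl_iff, mem_Icc, not_and, not_le]
                intro h0; linarith [hx.2]), zero_add]
      have : b + ∑ i, ((μs i) (Icc 0 b)).toReal - a
          = (b - a) + ∑ i, ((μs i) (Icc 0 b)).toReal := by ring
      rw [this, ENNReal.ofReal_add (by linarith) (Finset.sum_nonneg fun i _ => ENNReal.toReal_nonneg),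
        ENNReal.ofReal_sum_of_nonneg (fun i _ => ENNReal.toReal_nonneg)]
      congr 1
      refine Finset.sum_congr rfl fun i _ => ?_
      rw [ENNReal.ofReal_toReal (measure_ne_top _ _), hIoc i]
    · rw [hφ a, if_neg (not_lt.2 ha)]
      have hdec : ∀ i, μs i (Icc 0 b) = μs i (Icc 0 a) + μs i (Ioc a b) := by
        intro i
        rw [← measure_union (disjoint_left.2 fun x hx hx' => absurd hx.2 (not_le.2 hx'.1))
          measurableSet_Ioc, Icc_union_Ioc_eq_Icc ha hab.le]
      have hreal : ∀ i, ((μs i) (Icc 0 b)).toReal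
          = ((μs i) (Icc 0 a)).toReal + ((μs i) (Ioc a b)).toReal := by
        intro i
        rw [hdec i, ENNReal.toReal_add (measure_ne_top _ _) (measure_ne_top _ _)]
      have : b + ∑ i, ((μs i) (Icc 0 b)).toReal - (a + ∑ i, ((μs i) (Icc 0 a)).toReal)
          = (b - a) + ∑ i, ((μs i) (Ioc a b)).toReal := by
        simp only [hreal, Finset.sum_add_distrib]; ring
      rw [this, ENNReal.ofReal_add (by linarith) (Finset.sum_nonneg fun i _ => ENNReal.toReal_nonneg),
        ENNReal.ofReal_sum_of_nonneg (fun i _ => ENNReal.toReal_nonneg)]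
      congr 1
      exact Finset.sum_congr rfl fun i _ => ENNReal.ofReal_toReal (measure_ne_top _ _)
theorem stmt_7 (N : ℕ) (hN : 1 ≤ N) (h : ℝ) (hh : 0 < h)
    (μs : Fin N → Measure ℝ)
    (hfin : ∀ i, IsFiniteMeasure (μs i))
    (hsupp : ∀ i, μs i ((Icc (0:ℝ) h)ᶜ) = 0)
    (φ : StieltjesFunction ℝ)
    (hφ : ∀ r : ℝ, φ r = if r < 0 then r else r + ∑ i, ((μs i) (Icc 0 r)).toReal) :
    (volume.restrict (Icc (0:ℝ) h) ≪ φ.measure) ∧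
    (∀ i, contPart (μs i) ≪ φ.measure) ∧
    (∀ᵐ r ∂φ.measure, (volume.restrict (Icc (0:ℝ) h)).rnDeriv φ.measure r ≤ 1) ∧
    (∀ i, ∀ᵐ r ∂φ.measure, (contPart (μs i)).rnDeriv φ.measure r ≤ 1) ∧
    (∀ᵐ r ∂(φ.measure.restrict (Icc (0:ℝ) h \ {t | φ.measure {t} ≠ 0})),
      (volume.restrict (Icc (0:ℝ) h)).rnDeriv φ.measure r
        + ∑ i, (contPart (μs i)).rnDeriv φ.measure r = 1) ∧
    (∀ᵐ r ∂(φ.measure.restrict {t | φ.measure {t} ≠ 0}),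
      (volume.restrict (Icc (0:ℝ) h)).rnDeriv φ.measure r = 0 ∧
      ∀ i, (contPart (μs i)).rnDeriv φ.measure r = 0) := by
  haveI := hfin
  set A : Set ℝ := Icc (0:ℝ) h with hA
  have hAm : MeasurableSet A := measurableSet_Icc
  have hΦ : φ.measure = volume + ∑ i, μs i := phi_measure_eq N h μs hfin hsupp φ hφ
  -- basic inequalities
  have hvol_le : volume.restrict A ≤ φ.measure := by
    rw [hΦ]; exact Measure.le_add_right Measure.restrict_le_self
  have hmu_le : ∀ i, μs i ≤ φ.measure := by
    intro i; rw [hΦ]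
    intro s
    rw [Measure.add_apply, Measure.finset_sum_apply]
    calc μs i s ≤ ∑ j, μs j s :=
          Finset.single_le_sum (f := fun j => μs j s) (fun j _ => zero_le) (Finset.mem_univ i)
      _ ≤ _ := le_add_self
  have hcont_le : ∀ i, contPart (μs i) ≤ φ.measure :=
    fun i => Measure.restrict_le_self.trans (hmu_le i)
  -- atom sets
  set S : Set ℝ := {t : ℝ | φ.measure {t} ≠ 0} with hS
  have hScount : S.Countable := countable_atoms _
  have hSm : MeasurableSet S := hScount.measurableSet
  set C : Fin N → Set ℝ := fun i => {t : ℝ | μs i {t} = 0} with hC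
  have hCm : ∀ i, MeasurableSet (C i) := by
    intro i
    have h1 : MeasurableSet {t : ℝ | μs i {t} ≠ 0} := (countable_atoms (μs i)).measurableSet
    have : C i = {t : ℝ | μs i {t} ≠ 0}ᶜ := by ext x; simp [hC]
    rw [this]; exact h1.compl
  have hCsubS : ∀ i, (C i)ᶜ ⊆ S := by
    intro i x hx
    simp only [mem_compl_iff, mem_setOf_eq, hC] at hx
    intro h0
    exact hx (le_antisymm (le_trans (hmu_le i _) h0.le) zero_le)
  -- the bad part
  set νbad : Measure ℝ := volume.restrict Aᶜ + ∑ i, (μs i).restrict (C i)ᶜ with hνbad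
  set νgood : Measure ℝ := volume.restrict A + ∑ i, contPart (μs i) with hνgood
  haveI : ∀ i, IsFiniteMeasure (contPart (μs i)) := fun i => by
    unfold contPart; infer_instance
  haveI : IsFiniteMeasure (∑ i, (μs i).restrict (C i)ᶜ) := isFiniteMeasure_finset_sum _ _
  haveI : IsFiniteMeasure (∑ i, contPart (μs i)) := isFiniteMeasure_finset_sum _ _
  haveI : IsFiniteMeasure (volume.restrict A) := by
    constructor; rw [Measure.restrict_apply_univ, hA, Real.volume_Icc]; exact ENNReal.ofReal_lt_top
  have hdec : φ.measure = νbad + νgood := by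
    rw [hΦ, hνbad, hνgood]
    conv_lhs => rw [← Measure.restrict_add_restrict_compl (μ := volume) hAm]
    have hmui : ∀ i, μs i = contPart (μs i) + (μs i).restrict (C i)ᶜ := by
      intro i
      exact (Measure.restrict_add_restrict_compl (hCm i)).symm
    conv_lhs => rw [Finset.sum_congr rfl fun i _ => hmui i]
    rw [Finset.sum_add_distrib]
    abel
  have hbad_le : νbad ≤ φ.measure := by rw [hdec]; exact Measure.le_add_right le_rfl
  have hbad_ac : νbad ≪ φ.measure := Measure.absolutelyContinuous_of_le hbad_le
  -- the key a.e. identity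
  have hkey : ∀ᵐ x ∂φ.measure,
      (volume.restrict A).rnDeriv φ.measure x
        + ∑ i, (contPart (μs i)).rnDeriv φ.measure x
        + νbad.rnDeriv φ.measure x = 1 := by
    have h1 : φ.measure.rnDeriv φ.measure =ᵐ[φ.measure] fun _ => 1 :=
      Measure.rnDeriv_self _
    have h2 : (νbad + νgood).rnDeriv φ.measure
        =ᵐ[φ.measure] νbad.rnDeriv φ.measure + νgood.rnDeriv φ.measure :=
      Measure.rnDeriv_add' _ _ _
    have h3 : νgood.rnDeriv φ.measure =ᵐ[φ.measure]
        (volume.restrict A).rnDeriv φ.measure + (∑ i, contPart (μs i)).rnDeriv φ.measure :=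
      Measure.rnDeriv_add' _ _ _
    have h4 : (∑ i, contPart (μs i)).rnDeriv φ.measure =ᵐ[φ.measure]
        fun x => ∑ i, (contPart (μs i)).rnDeriv φ.measure x :=
      rnDeriv_finset_sum _ _ _
    have h5 : φ.measure.rnDeriv φ.measure = (νbad + νgood).rnDeriv φ.measure := by rw [← hdec]
    filter_upwards [h1, h2, h3, h4] with x hx1 hx2 hx3 hx4
    rw [h5] at hx1
    rw [hx2] at hx1
    simp only [Pi.add_apply] at hx1 hx3
    rw [hx3, hx4] at hx1
    rw [← hx1]; ring
  -- rnDeriv of νbad vanishes a.e. on A \ S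
  have hbadAS : νbad (A \ S) = 0 := by
    rw [hνbad, Measure.add_apply, Measure.finset_sum_apply]
    have h1 : (volume.restrict Aᶜ) (A \ S) = 0 := by
      rw [Measure.restrict_apply (hAm.diff hSm)]
      refine measure_mono_null ?_ (measure_empty (μ := volume))
      intro x hx; exact absurd hx.1.1 hx.2
    have h2 : ∀ i, ((μs i).restrict (C i)ᶜ) (A \ S) = 0 := by
      intro i
      rw [Measure.restrict_apply (hAm.diff hSm)]
      refine measure_mono_null ?_ (measure_empty (μ := μs i))
      intro x hx
      exact absurd (hCsubS i hx.2) hx.1.2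
    simp [h1, h2]
  have hbad0 : ∀ᵐ x ∂(φ.measure.restrict (A \ S)), νbad.rnDeriv φ.measure x = 0 := by
    have hint : ∫⁻ x in A \ S, νbad.rnDeriv φ.measure x ∂φ.measure = 0 := by
      rw [Measure.setLIntegral_rnDeriv' hbad_ac (hAm.diff hSm), hbadAS]
    rw [lintegral_eq_zero_iff (Measure.measurable_rnDeriv _ _)] at hint
    exact hint
  -- part 6 ingredients
  have hvolS : (volume.restrict A) S = 0 := by
    rw [Measure.restrict_apply hSm]
    exact measure_mono_null inter_subset_left (hScount.measure_zero _)
  have hcontS : ∀ i, (contPart (μs i)) S = 0 := by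
    intro i
    rw [contPart, Measure.restrict_apply hSm]
    refine null_of_countable _ _ (hScount.mono inter_subset_left) fun x hx => hx.2
  have hvol_ac : volume.restrict A ≪ φ.measure := Measure.absolutelyContinuous_of_le hvol_le
  have hcont_ac : ∀ i, contPart (μs i) ≪ φ.measure :=
    fun i => Measure.absolutelyContinuous_of_le (hcont_le i)
  have hvol0 : ∀ᵐ x ∂(φ.measure.restrict S), (volume.restrict A).rnDeriv φ.measure x = 0 := by
    have hint : ∫⁻ x in S, (volume.restrict A).rnDeriv φ.measure x ∂φ.measure = 0 := by
      rw [Measure.setLIntegral_rnDeriv' hvol_ac hSm, hvolS]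
    rw [lintegral_eq_zero_iff (Measure.measurable_rnDeriv _ _)] at hint
    exact hint
  have hcont0 : ∀ i, ∀ᵐ x ∂(φ.measure.restrict S),
      (contPart (μs i)).rnDeriv φ.measure x = 0 := by
    intro i
    have hint : ∫⁻ x in S, (contPart (μs i)).rnDeriv φ.measure x ∂φ.measure = 0 := by
      rw [Measure.setLIntegral_rnDeriv' (hcont_ac i) hSm, hcontS i]
    rw [lintegral_eq_zero_iff (Measure.measurable_rnDeriv _ _)] at hint
    exact hint
  refine ⟨hvol_ac, hcont_ac, Measure.rnDeriv_le_one_of_le hvol_le,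
    fun i => Measure.rnDeriv_le_one_of_le (hcont_le i), ?_, ?_⟩
  · filter_upwards [ae_restrict_of_ae hkey, hbad0] with x hx h0
    rw [h0, add_zero] at hx
    exact hx
  · have hall : ∀ᵐ x ∂(φ.measure.restrict S),
        ∀ i, (contPart (μs i)).rnDeriv φ.measure x = 0 := ae_all_iff.2 hcont0
    filter_upwards [hvol0, hall] with x h1 h2
    exact ⟨h1, h2⟩
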